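/- (Matrix polynomial block encoding — algebraic core.) Let H be an n-qubit operator with a (λ-normalized) FOQCS-LCU block encoding, and let p_d(H) = Σ_{k=0}^{d} a_k H^k with a_k ∈ ℂ. Set w_k = sqrt(|a_k| λ^k), W = Σ_{k=0}^{d} w_k² = Σ_k |a_k| λ^k, φ_k = arg(a_{k+1}) − arg(a_k), and define unary-register states |R_out⟩ = W^{-1/2} Σ_{k=0}^{d} e^{i Σ_{j<k} φ_j} w_k |k_u⟩ and |L_out⟩ = W^{-1/2} Σ_k w_k |k_u⟩. Suppose the combined circuit acts so that, conditioned on the unary ancilla being in |k_u⟩ and post-selecting inner block-encoding ancillas on zero, the system undergoes λ^{-k} H^k. Then the full post-selected operator equals ⟨L_out| (Σ_k |k_u⟩⟨k_u| ⊗ λ^{-k} H^k) |R_out⟩ = e^{-i arg(a_0)} W^{-1} p_d(H). In particular, up to the global phase e^{-i arg(a_0)}, the circuit block-encodes p_d(H)/W. -/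

import Mathlib

open Matrix Finset

noncomputable section

/-- The unary encoding `|k_u⟩ = |1⟩^{⊗k}|0⟩^{⊗(d−k)}` as a bit string. -/
def unary (d : ℕ) (k : ℕ) : Fin d → Fin 2 :=
  fun ℓ => if (ℓ : ℕ) < k then 1 else 0

lemma unary_inj {d k m : ℕ} (hk : k ≤ d) (hm : m ≤ d)
    (h : unary d k = unary d m) : k = m := by
  by_contra hne
  rcases Nat.lt_or_ge k m with hlt | hge
  · have hkd : k < d := lt_of_lt_of_le hlt hm
    have := congrFun h ⟨k, hkd⟩
    simp [unary, hlt] at this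
  · have hlt : m < k := lt_of_le_of_ne hge (Ne.symm hne)
    have hmd : m < d := lt_of_lt_of_le hlt hk
    have := congrFun h ⟨m, hmd⟩
    simp [unary, hlt] at this

/-- matrix polynomial block encoding — algebraic core: with
`w_k = √(|a_k| λ^k)`, `W = Σ w_k²`, `φ_k = arg(a_{k+1}) − arg(a_k)`, the unary
outer states `|R_out⟩, |L_out⟩`, and the diagonal-in-unary operator
`G = Σ_k |k_u⟩⟨k_u| ⊗ λ^{-k} H^k`, the post-selected operator
`⟨L_out| G |R_out⟩` equals `e^{-i arg(a_0)} W^{-1} p_d(H)` with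
`p_d(H) = Σ_{k=0}^{d} a_k H^k`. -/
theorem stmt14 (n d : ℕ)
    (H : Matrix (Fin n → Fin 2) (Fin n → Fin 2) ℂ)
    (lam : ℝ) (hlam : 0 < lam)
    (a : ℕ → ℂ) (ha0 : a 0 ≠ 0)
    (w : ℕ → ℝ) (hw : ∀ k, w k = Real.sqrt (‖a k‖ * lam ^ k))
    (Wn : ℝ) (hWn : Wn = ∑ k ∈ Finset.range (d + 1), (w k) ^ 2)
    (φ : ℕ → ℝ) (hφ : ∀ k, φ k = (a (k + 1)).arg - (a k).arg)
    (Rout Lout : (Fin d → Fin 2) → ℂ)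
    (hR : Rout = fun x => (Real.sqrt Wn : ℂ)⁻¹ *
      ∑ k ∈ Finset.range (d + 1),
        Complex.exp (Complex.I * (∑ j ∈ Finset.range k, φ j)) * (w k : ℂ) *
          (if x = unary d k then 1 else 0))
    (hL : Lout = fun x => (Real.sqrt Wn : ℂ)⁻¹ *
      ∑ k ∈ Finset.range (d + 1),
        (w k : ℂ) * (if x = unary d k then 1 else 0))
    (G : Matrix ((Fin d → Fin 2) × (Fin n → Fin 2))
                ((Fin d → Fin 2) × (Fin n → Fin 2)) ℂ)
    (hG : G = fun x y => ∑ k ∈ Finset.range (d + 1),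
      (if x.1 = unary d k ∧ y.1 = unary d k then 1 else 0) *
        (((lam : ℂ) ^ k)⁻¹ * (H ^ k) x.2 y.2)) :
    (fun u v => ∑ x : Fin d → Fin 2, ∑ y : Fin d → Fin 2,
        (starRingEnd ℂ) (Lout x) * G (x, u) (y, v) * Rout y)
    = fun u v => Complex.exp (-(Complex.I * (a 0).arg)) * (Wn : ℂ)⁻¹ *
        (∑ k ∈ Finset.range (d + 1), a k • H ^ k) u v := by
  have hWnn : 0 ≤ Wn := by
    rw [hWn]; exact Finset.sum_nonneg fun k _ => sq_nonneg _
  funext u v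
  have hLval : ∀ k ∈ Finset.range (d + 1),
      Lout (unary d k) = (Real.sqrt Wn : ℂ)⁻¹ * (w k : ℂ) := by
    intro k hk
    rw [Finset.mem_range, Nat.lt_succ_iff] at hk
    simp only [hL]
    congr 1
    rw [Finset.sum_eq_single_of_mem k (Finset.mem_range.mpr (Nat.lt_succ_of_le hk))]
    · simp
    · intro m hm hne
      rw [Finset.mem_range, Nat.lt_succ_iff] at hm
      have : unary d k ≠ unary d m := fun h => hne (unary_inj hk hm h).symm
      simp [this]
  have hRval : ∀ k ∈ Finset.range (d + 1),
      Rout (unary d k) = (Real.sqrt Wn : ℂ)⁻¹ *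
        (Complex.exp (Complex.I * (∑ j ∈ Finset.range k, φ j)) * (w k : ℂ)) := by
    intro k hk
    rw [Finset.mem_range, Nat.lt_succ_iff] at hk
    simp only [hR]
    congr 1
    rw [Finset.sum_eq_single_of_mem k (Finset.mem_range.mpr (Nat.lt_succ_of_le hk))]
    · simp
    · intro m hm hne
      rw [Finset.mem_range, Nat.lt_succ_iff] at hm
      have : unary d k ≠ unary d m := fun h => hne (unary_inj hk hm h).symm
      simp [this]
  have step1 : (∑ x : Fin d → Fin 2, ∑ y : Fin d → Fin 2,
        (starRingEnd ℂ) (Lout x) * G (x, u) (y, v) * Rout y)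
      = ∑ k ∈ Finset.range (d + 1),
          (starRingEnd ℂ) (Lout (unary d k)) *
            (((lam : ℂ) ^ k)⁻¹ * (H ^ k) u v) * Rout (unary d k) := by
    have hterm : ∀ x y : Fin d → Fin 2,
        (starRingEnd ℂ) (Lout x) * G (x, u) (y, v) * Rout y
        = ∑ k ∈ Finset.range (d + 1),
            (if x = unary d k then (starRingEnd ℂ) (Lout x) else 0) *
              (((lam : ℂ) ^ k)⁻¹ * (H ^ k) u v) *
            (if y = unary d k then Rout y else 0) := by
      intro x y
      rw [hG]
      simp only [Finset.mul_sum, Finset.sum_mul]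
      refine Finset.sum_congr rfl fun k _ => ?_
      by_cases hx : x = unary d k <;> by_cases hy : y = unary d k <;>
        simp [hx, hy] <;> ring
    simp only [hterm]
    rw [show (∑ x : Fin d → Fin 2, ∑ y : Fin d → Fin 2,
          ∑ k ∈ Finset.range (d + 1),
            (if x = unary d k then (starRingEnd ℂ) (Lout x) else 0) *
              (((lam : ℂ) ^ k)⁻¹ * (H ^ k) u v) *
            (if y = unary d k then Rout y else 0))
        = ∑ k ∈ Finset.range (d + 1), ∑ x : Fin d → Fin 2, ∑ y : Fin d → Fin 2,
            (if x = unary d k then (starRingEnd ℂ) (Lout x) else 0) *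
              (((lam : ℂ) ^ k)⁻¹ * (H ^ k) u v) *
            (if y = unary d k then Rout y else 0) from by
      rw [show (∑ x : Fin d → Fin 2, ∑ y : Fin d → Fin 2,
            ∑ k ∈ Finset.range (d + 1),
              (if x = unary d k then (starRingEnd ℂ) (Lout x) else 0) *
                (((lam : ℂ) ^ k)⁻¹ * (H ^ k) u v) *
              (if y = unary d k then Rout y else 0))
          = ∑ x : Fin d → Fin 2, ∑ k ∈ Finset.range (d + 1), ∑ y : Fin d → Fin 2,
              (if x = unary d k then (starRingEnd ℂ) (Lout x) else 0) *
                (((lam : ℂ) ^ k)⁻¹ * (H ^ k) u v) *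
              (if y = unary d k then Rout y else 0) from
        Finset.sum_congr rfl fun x _ => Finset.sum_comm]
      exact Finset.sum_comm]
    refine Finset.sum_congr rfl fun k _ => ?_
    simp [ite_mul, mul_ite, Finset.sum_ite_eq', Finset.mem_univ]
  rw [step1]
  have hRHS : (∑ k ∈ Finset.range (d + 1), a k • H ^ k) u v
      = ∑ k ∈ Finset.range (d + 1), a k * (H ^ k) u v := by
    rw [Matrix.sum_apply]
    exact Finset.sum_congr rfl fun k _ => rfl
  rw [hRHS, Finset.mul_sum]
  refine Finset.sum_congr rfl fun k hk => ?_
  rw [hLval k hk, hRval k hk]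
  have hkd : k ≤ d := Nat.lt_succ_iff.mp (Finset.mem_range.mp hk)
  have hΦ : (∑ j ∈ Finset.range k, φ j) = (a k).arg - (a 0).arg := by
    simp only [hφ]
    exact Finset.sum_range_sub (fun j => (a j).arg) k
  rw [hΦ]
  have hs : ((Real.sqrt Wn : ℝ) : ℂ)⁻¹ * ((Real.sqrt Wn : ℝ) : ℂ)⁻¹ = ((Wn : ℝ) : ℂ)⁻¹ := by
    rw [← mul_inv, ← Complex.ofReal_mul, Real.mul_self_sqrt hWnn]
  have hww : ((w k : ℝ) : ℂ) * ((w k : ℝ) : ℂ) = (‖a k‖ : ℂ) * (lam : ℂ) ^ k := by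
    rw [hw k, ← Complex.ofReal_mul,
      Real.mul_self_sqrt (mul_nonneg (norm_nonneg _) (le_of_lt (pow_pos hlam k)))]
    push_cast
    ring
  have hlamne : ((lam : ℂ)) ^ k ≠ 0 := pow_ne_zero _ (by
    simp only [ne_eq, Complex.ofReal_eq_zero]; exact ne_of_gt hlam)
  have hexp : Complex.exp (Complex.I * ((((a k).arg - (a 0).arg : ℝ)) : ℂ))
      = Complex.exp (-(Complex.I * (a 0).arg)) * Complex.exp (((a k).arg : ℂ) * Complex.I) := by
    rw [← Complex.exp_add]
    congr 1
    push_cast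
    ring
  have hak : (‖a k‖ : ℂ) * Complex.exp (((a k).arg : ℂ) * Complex.I) = a k :=
    Complex.norm_mul_exp_arg_mul_I (a k)
  rw [_root_.map_mul, map_inv₀, Complex.conj_ofReal, Complex.conj_ofReal, hexp]
  conv_rhs => rw [← hak]
  calc ((Real.sqrt Wn : ℝ) : ℂ)⁻¹ * ((w k : ℝ) : ℂ) * (((lam : ℂ) ^ k)⁻¹ * (H ^ k) u v) *
        (((Real.sqrt Wn : ℝ) : ℂ)⁻¹ *
          (Complex.exp (-(Complex.I * (a 0).arg)) * Complex.exp (((a k).arg : ℂ) * Complex.I) *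
            ((w k : ℝ) : ℂ)))
      = (((Real.sqrt Wn : ℝ) : ℂ)⁻¹ * ((Real.sqrt Wn : ℝ) : ℂ)⁻¹) *
          ((((w k : ℝ) : ℂ) * ((w k : ℝ) : ℂ)) * (((lam : ℂ) ^ k)⁻¹ *
            (Complex.exp (-(Complex.I * (a 0).arg)) *
              (Complex.exp (((a k).arg : ℂ) * Complex.I) * (H ^ k) u v)))) := by ring
    _ = ((Wn : ℝ) : ℂ)⁻¹ * (((‖a k‖ : ℂ) * (lam : ℂ) ^ k) * (((lam : ℂ) ^ k)⁻¹ *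
            (Complex.exp (-(Complex.I * (a 0).arg)) *
              (Complex.exp (((a k).arg : ℂ) * Complex.I) * (H ^ k) u v)))) := by rw [hs, hww]
    _ = ((Wn : ℝ) : ℂ)⁻¹ * ((‖a k‖ : ℂ) * (((lam : ℂ) ^ k * ((lam : ℂ) ^ k)⁻¹) *
            (Complex.exp (-(Complex.I * (a 0).arg)) *
              (Complex.exp (((a k).arg : ℂ) * Complex.I) * (H ^ k) u v)))) := by ring
    _ = Complex.exp (-(Complex.I * (a 0).arg)) * ((Wn : ℝ) : ℂ)⁻¹ *
          ((‖a k‖ : ℂ) * Complex.exp (((a k).arg : ℂ) * Complex.I) * (H ^ k) u v) := by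
        rw [mul_inv_cancel₀ hlamne]; ring
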